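/- Let K and L be convex bodies in ℝⁿ containing the origin in their interiors. If for every unit vector ξ the unordered pairs {h_K(ξ), h_K(−ξ)} and {h_L(ξ), h_L(−ξ)} coincide, then K \ L = −(L \ K). -/

import Mathlib

open Set

/-- The support function of `K`: `h_K(x) = sup {⟨x, y⟩ : y ∈ K}`. -/
noncomputable def supp {n : ℕ} (K : Set (EuclideanSpace ℝ (Fin n)))
    (x : EuclideanSpace ℝ (Fin n)) : ℝ :=
  sSup ((fun y => (inner ℝ x y : ℝ)) '' K)

variable {n : ℕ} {K L : Set (EuclideanSpace ℝ (Fin n))}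

lemma inner_le_supp (hKc : IsCompact K) {y : EuclideanSpace ℝ (Fin n)} (hy : y ∈ K)
    (x : EuclideanSpace ℝ (Fin n)) : (inner ℝ x y : ℝ) ≤ supp K x :=
  le_csSup ((hKc.image (continuous_const.inner continuous_id)).bddAbove) ⟨y, hy, rfl⟩

lemma supp_le (hne : K.Nonempty) {x : EuclideanSpace ℝ (Fin n)} {c : ℝ}
    (hc : ∀ y ∈ K, (inner ℝ x y : ℝ) ≤ c) : supp K x ≤ c :=
  csSup_le (hne.image _) (by rintro r ⟨y, hy, rfl⟩; exact hc y hy)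

lemma supp_smul_le (hne : K.Nonempty) (hKc : IsCompact K) (x : EuclideanSpace ℝ (Fin n))
    {c : ℝ} (hc : 0 ≤ c) : supp K (c • x) ≤ c * supp K x := by
  apply supp_le hne
  intro y hy
  rw [real_inner_smul_left]
  exact mul_le_mul_of_nonneg_left (inner_le_supp hKc hy x) hc

lemma supp_smul (hne : K.Nonempty) (hKc : IsCompact K) (x : EuclideanSpace ℝ (Fin n))
    {c : ℝ} (hc : 0 < c) : supp K (c • x) = c * supp K x := by
  refine le_antisymm (supp_smul_le hne hKc x hc.le) ?_
  have h2 : supp K (c⁻¹ • (c • x)) ≤ c⁻¹ * supp K (c • x) :=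
    supp_smul_le hne hKc _ (inv_nonneg.2 hc.le)
  rw [inv_smul_smul₀ hc.ne' x] at h2
  calc c * supp K x ≤ c * (c⁻¹ * supp K (c • x)) := by
        exact mul_le_mul_of_nonneg_left h2 hc.le
    _ = supp K (c • x) := by field_simp

lemma supp_nonneg (hKc : IsCompact K) (h0 : (0 : EuclideanSpace ℝ (Fin n)) ∈ K)
    (x : EuclideanSpace ℝ (Fin n)) : 0 ≤ supp K x := by
  simpa using inner_le_supp hKc h0 x

lemma supp_continuous (hKc : IsCompact K) (hne : K.Nonempty) : Continuous (supp K) := by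
  obtain ⟨R, hR⟩ := hKc.isBounded.exists_norm_le
  have key : ∀ a b : EuclideanSpace ℝ (Fin n), supp K a ≤ supp K b + R * ‖a - b‖ := by
    intro a b
    apply supp_le hne
    intro y hy
    have h1 : (inner ℝ b y : ℝ) ≤ supp K b := inner_le_supp hKc hy b
    have h2 : (inner ℝ (a - b) y : ℝ) ≤ ‖a - b‖ * ‖y‖ := real_inner_le_norm _ _
    have h3 : ‖a - b‖ * ‖y‖ ≤ ‖a - b‖ * R :=
      mul_le_mul_of_nonneg_left (hR y hy) (norm_nonneg _)
    have h4 : (inner ℝ a y : ℝ) = inner ℝ b y + inner ℝ (a - b) y := by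
      rw [inner_sub_left]; ring
    rw [h4]; nlinarith
  have hR0 : 0 ≤ R := le_trans (norm_nonneg _) (hR _ hne.choose_spec)
  refine (LipschitzWith.of_dist_le_mul (K := R.toNNReal) fun a b => ?_).continuous
  rw [Real.dist_eq, Real.coe_toNNReal R hR0, dist_eq_norm, abs_sub_le_iff]
  constructor
  · have := key a b; linarith
  · have := key b a; rw [← norm_neg, neg_sub] at this; linarith

lemma exists_unit_sep (hLc : IsCompact L) (hLv : Convex ℝ L)
    (h0 : (0 : EuclideanSpace ℝ (Fin n)) ∈ L) {x : EuclideanSpace ℝ (Fin n)} (hx : x ∉ L) :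
    ∃ ξ : EuclideanSpace ℝ (Fin n), ‖ξ‖ = 1 ∧ supp L ξ < (inner ℝ ξ x : ℝ) := by
  obtain ⟨f, u, hfu, hux⟩ := geometric_hahn_banach_closed_point hLv hLc.isClosed hx
  set v := (InnerProductSpace.toDual ℝ (EuclideanSpace ℝ (Fin n))).symm f with hv
  have hfv : ∀ w, (inner ℝ v w : ℝ) = f w := fun w => InnerProductSpace.toDual_symm_apply
  have hu0 : (0 : ℝ) < u := by have := hfu 0 h0; rwa [map_zero] at this
  have hvne : v ≠ 0 := by
    intro hv0
    have := hfv x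
    rw [hv0, inner_zero_left] at this
    linarith
  have hnv : (0 : ℝ) < ‖v‖ := norm_pos_iff.2 hvne
  refine ⟨‖v‖⁻¹ • v, ?_, ?_⟩
  · rw [norm_smul, norm_inv, norm_norm, inv_mul_cancel₀ hnv.ne']
  · have hLv_le : supp L v ≤ u :=
      supp_le ⟨0, h0⟩ fun y hy => by rw [hfv y]; exact (hfu y hy).le
    have := supp_smul (K := L) ⟨0, h0⟩ hLc v (inv_pos.2 hnv)
    rw [this, real_inner_smul_left]
    have hfx : (inner ℝ v x : ℝ) = f x := hfv x
    have : supp L v < (inner ℝ v x : ℝ) := by rw [hfx]; linarith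
    exact mul_lt_mul_of_pos_left this (inv_pos.2 hnv)

lemma key_mem (hKc : IsCompact K) (hLc : IsCompact L) (hLv : Convex ℝ L)
    (hL0 : (0 : EuclideanSpace ℝ (Fin n)) ∈ L)
    (h : ∀ ξ : EuclideanSpace ℝ (Fin n), ‖ξ‖ = 1 →
      ({supp K ξ, supp K (-ξ)} : Set ℝ) = {supp L ξ, supp L (-ξ)})
    {x : EuclideanSpace ℝ (Fin n)} (hxK : x ∈ K) (hxL : x ∉ L) : -x ∈ L := by
  by_contra hnx
  obtain ⟨ξ, hξ1, hξ⟩ := exists_unit_sep hLc hLv hL0 hxL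
  obtain ⟨η₀, hη₀1, hη₀⟩ := exists_unit_sep hLc hLv hL0 hnx
  set η : EuclideanSpace ℝ (Fin n) := -η₀ with hηdef
  have hη1 : ‖η‖ = 1 := by rw [hηdef, norm_neg]; exact hη₀1
  have hηx : supp L (-η) < (inner ℝ η x : ℝ) := by
    have e1 : (inner ℝ η x : ℝ) = inner ℝ η₀ (-x) := by
      rw [hηdef, inner_neg_left, inner_neg_right]
    have e2 : -η = η₀ := by rw [hηdef, neg_neg]
    rw [e1, e2]; exact hη₀
  have hxKξ : (inner ℝ ξ x : ℝ) ≤ supp K ξ := inner_le_supp hKc hxK ξ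
  have pairξ := (Set.pair_eq_pair_iff).1 (h ξ hξ1)
  have hKξ2 : supp K ξ = supp L (-ξ) ∧ supp K (-ξ) = supp L ξ := by
    rcases pairξ with ⟨h1, h2⟩ | hp
    · linarith
    · exact hp
  have hxKη : (inner ℝ η x : ℝ) ≤ supp K η := inner_le_supp hKc hxK η
  have pairη := (Set.pair_eq_pair_iff).1 (h η hη1)
  have hKη2 : supp K η = supp L η ∧ supp K (-η) = supp L (-η) := by
    rcases pairη with hp | ⟨h1, h2⟩
    · exact hp
    · linarith
  have hKmξ : supp K (-ξ) < (inner ℝ ξ x : ℝ) := by rw [hKξ2.2]; exact hξ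
  have hKmη : supp K (-η) < (inner ℝ η x : ℝ) := by rw [hKη2.2]; exact hηx
  have hne : η ≠ -ξ := by
    intro he
    have h0ξ : (0 : ℝ) ≤ supp L ξ := supp_nonneg hLc hL0 ξ
    have h2 : supp L ξ < (inner ℝ (-ξ) x : ℝ) := by
      have := hηx; rw [he, neg_neg] at this; exact this
    rw [inner_neg_left] at h2
    linarith
  set z : ℝ → EuclideanSpace ℝ (Fin n) := fun t => (1 - t) • ξ + t • η with hzdef
  have hznz : ∀ t ∈ Icc (0 : ℝ) 1, z t ≠ 0 := by
    rintro t ⟨ht0, ht1⟩ h0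
    have he : (1 - t) • ξ = -(t • η) := eq_neg_of_add_eq_zero_left h0
    have hn : |1 - t| = |t| := by
      have := congrArg norm he
      rwa [norm_neg, norm_smul, norm_smul, hξ1, hη1, mul_one, mul_one,
        Real.norm_eq_abs, Real.norm_eq_abs] at this
    rw [abs_of_nonneg (by linarith), abs_of_nonneg ht0] at hn
    have ht : t = 1 / 2 := by linarith
    have hsum : (1 / 2 : ℝ) • (ξ + η) = 0 := by
      rw [smul_add]
      have := h0
      rw [ht] at this
      convert this using 2
      norm_num
    have hξη : ξ + η = 0 := by
      have := smul_eq_zero.1 hsum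
      rcases this with hh | hh
      · norm_num at hh
      · exact hh
    exact hne (eq_neg_of_add_eq_zero_right hξη)
  -- inner ℝ products along the segment
  have hinner : ∀ t : ℝ, (inner ℝ (z t) x : ℝ) = (1 - t) * inner ℝ ξ x + t * inner ℝ η x := by
    intro t
    rw [hzdef]
    simp only [inner_add_left, real_inner_smul_left]
  -- IVT
  have hcz : Continuous z := by
    apply Continuous.add
    · exact (continuous_const.sub continuous_id).smul continuous_const
    · exact continuous_id.smul continuous_const
  have hcψ : Continuous fun t => supp L (z t) - supp L (-(z t)) :=
    ((supp_continuous hLc ⟨0, hL0⟩).comp hcz).sub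
      ((supp_continuous hLc ⟨0, hL0⟩).comp hcz.neg)
  have hz0 : z 0 = ξ := by rw [hzdef]; simp
  have hz1 : z 1 = η := by rw [hzdef]; simp
  have hψ0 : supp L (z 0) - supp L (-(z 0)) < 0 := by
    rw [hz0]
    have : (inner ℝ ξ x : ℝ) ≤ supp L (-ξ) := by rw [← hKξ2.1]; exact hxKξ
    linarith
  have hψ1 : 0 < supp L (z 1) - supp L (-(z 1)) := by
    rw [hz1]
    have : (inner ℝ η x : ℝ) ≤ supp L η := by rw [← hKη2.1]; exact hxKη
    linarith
  obtain ⟨t, htI, hψt⟩ : ∃ t ∈ Icc (0:ℝ) 1, supp L (z t) - supp L (-(z t)) = 0 := by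
    have := intermediate_value_Icc (zero_le_one) hcψ.continuousOn
    have h0mem : (0 : ℝ) ∈ Icc (supp L (z 0) - supp L (-(z 0))) (supp L (z 1) - supp L (-(z 1))) :=
      ⟨hψ0.le, hψ1.le⟩
    obtain ⟨t, ht, het⟩ := this h0mem
    exact ⟨t, ht, het⟩
  obtain ⟨ht0, ht1⟩ := htI
  have hzt : z t ≠ 0 := hznz t ⟨ht0, ht1⟩
  have hc : (0 : ℝ) < ‖z t‖ := norm_pos_iff.2 hzt
  set ζ : EuclideanSpace ℝ (Fin n) := ‖z t‖⁻¹ • z t with hζdef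
  have hζ1 : ‖ζ‖ = 1 := by
    rw [hζdef, norm_smul, norm_inv, norm_norm, inv_mul_cancel₀ hc.ne']
  have hLζ : supp L ζ = supp L (-ζ) := by
    have e1 : supp L ζ = ‖z t‖⁻¹ * supp L (z t) :=
      supp_smul ⟨0, hL0⟩ hLc _ (inv_pos.2 hc)
    have e2 : supp L (-ζ) = ‖z t‖⁻¹ * supp L (-(z t)) := by
      rw [hζdef, ← smul_neg]
      exact supp_smul ⟨0, hL0⟩ hLc _ (inv_pos.2 hc)
    rw [e1, e2]
    have : supp L (z t) = supp L (-(z t)) := by linarith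
    rw [this]
  have hKζ : supp K ζ = supp K (-ζ) := by
    rcases (Set.pair_eq_pair_iff).1 (h ζ hζ1) with ⟨h1, h2⟩ | ⟨h1, h2⟩ <;> linarith
  have hKz : supp K (z t) = supp K (-(z t)) := by
    have e1 : supp K ζ = ‖z t‖⁻¹ * supp K (z t) :=
      supp_smul ⟨x, hxK⟩ hKc _ (inv_pos.2 hc)
    have e2 : supp K (-ζ) = ‖z t‖⁻¹ * supp K (-(z t)) := by
      rw [hζdef, ← smul_neg]
      exact supp_smul ⟨x, hxK⟩ hKc _ (inv_pos.2 hc)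
    rw [e1, e2] at hKζ
    have hinvne : (‖z t‖⁻¹ : ℝ) ≠ 0 := (inv_pos.2 hc).ne'
    exact mul_left_cancel₀ hinvne hKζ
  -- contradiction
  have hlow : (inner ℝ (z t) x : ℝ) ≤ supp K (z t) := inner_le_supp hKc hxK _
  have hup1 : supp K (-(z t)) ≤ (1 - t) * supp K (-ξ) + t * supp K (-η) := by
    apply supp_le ⟨x, hxK⟩
    intro y hy
    have h1 := inner_le_supp hKc hy (-ξ)
    have h2 := inner_le_supp hKc hy (-η)
    have e : (inner ℝ (-(z t)) y : ℝ) = (1 - t) * inner ℝ (-ξ) y + t * inner ℝ (-η) y := by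
      rw [hzdef]
      simp only [neg_add_rev, inner_add_left, inner_neg_left, real_inner_smul_left]
      ring
    rw [e]
    have := mul_le_mul_of_nonneg_left h1 (by linarith : (0:ℝ) ≤ 1 - t)
    have := mul_le_mul_of_nonneg_left h2 ht0
    linarith
  have hup2 : (1 - t) * supp K (-ξ) + t * supp K (-η) < (inner ℝ (z t) x : ℝ) := by
    rw [hinner t]
    rcases eq_or_lt_of_le ht1 with rfl | hlt
    · linarith
    · nlinarith
  linarith [hKz ▸ hlow]

lemma key_notmem (hKc : IsCompact K) (hLc : IsCompact L) (hLv : Convex ℝ L)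
    (hL0 : (0 : EuclideanSpace ℝ (Fin n)) ∈ L)
    (h : ∀ ξ : EuclideanSpace ℝ (Fin n), ‖ξ‖ = 1 →
      ({supp K ξ, supp K (-ξ)} : Set ℝ) = {supp L ξ, supp L (-ξ)})
    {x : EuclideanSpace ℝ (Fin n)} (hxK : x ∈ K) (hxL : x ∉ L) : -x ∉ K := by
  intro hnx
  obtain ⟨ξ, hξ1, hξ⟩ := exists_unit_sep hLc hLv hL0 hxL
  have hxKξ : (inner ℝ ξ x : ℝ) ≤ supp K ξ := inner_le_supp hKc hxK ξ
  have hKξ2 : supp K (-ξ) = supp L ξ := by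
    rcases (Set.pair_eq_pair_iff).1 (h ξ hξ1) with ⟨h1, h2⟩ | ⟨h1, h2⟩
    · linarith
    · exact h2
  have h2 : (inner ℝ (-ξ) (-x) : ℝ) ≤ supp K (-ξ) := inner_le_supp hKc hnx (-ξ)
  rw [inner_neg_neg] at h2
  linarith

theorem support_pairs_eq_imp_diff_symm {n : ℕ} (K L : Set (EuclideanSpace ℝ (Fin n)))
    (hKc : IsCompact K) (hKv : Convex ℝ K)
    (hK0 : (0 : EuclideanSpace ℝ (Fin n)) ∈ interior K)
    (hLc : IsCompact L) (hLv : Convex ℝ L)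
    (hL0 : (0 : EuclideanSpace ℝ (Fin n)) ∈ interior L)
    (h : ∀ ξ : EuclideanSpace ℝ (Fin n), ‖ξ‖ = 1 →
      ({supp K ξ, supp K (-ξ)} : Set ℝ) = {supp L ξ, supp L (-ξ)}) :
    K \ L = -(L \ K) := by
  have hK0' : (0 : EuclideanSpace ℝ (Fin n)) ∈ K := interior_subset hK0
  have hL0' : (0 : EuclideanSpace ℝ (Fin n)) ∈ L := interior_subset hL0
  have h' : ∀ ξ : EuclideanSpace ℝ (Fin n), ‖ξ‖ = 1 →
      ({supp L ξ, supp L (-ξ)} : Set ℝ) = {supp K ξ, supp K (-ξ)} :=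
    fun ξ hξ => (h ξ hξ).symm
  ext x
  simp only [Set.mem_diff, Set.mem_neg]
  constructor
  · rintro ⟨hxK, hxL⟩
    exact ⟨key_mem hKc hLc hLv hL0' h hxK hxL,
      key_notmem hKc hLc hLv hL0' h hxK hxL⟩
  · rintro ⟨hL', hK'⟩
    have h1 := key_mem hLc hKc hKv hK0' h' hL' hK'
    have h2 := key_notmem hLc hKc hKv hK0' h' hL' hK'
    rw [neg_neg] at h1 h2
    exact ⟨h1, h2⟩
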